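/- If G is a graph with an SOCDC and G' is the graph obtained from G by subdividing one edge of G (replacing an edge uv by a new vertex w and the two edges uw, wv), then G' also has an SOCDC. -/

import Mathlib

open SimpleGraph

/-- The list of arcs of a cyclically-read list of vertices:
`[(l₀,l₁), (l₁,l₂), …, (lₙ₋₁,l₀)]`. -/
def cycleArcs {V : Type*} (l : List V) : List (V × V) := l.zip (l.rotate 1)

/-- `l` represents a directed cycle of the symmetric orientation of `G`:
a cyclic sequence of at least three pairwise distinct vertices with consecutive
vertices adjacent (cyclically). -/
def IsDirCycle {V : Type*} (G : SimpleGraph V) (l : List V) : Prop :=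
  3 ≤ l.length ∧ l.Nodup ∧ ∀ p ∈ cycleArcs l, G.Adj p.1 p.2

/-- An oriented cycle double cover of `G` : a collection of directed cycles of the
symmetric orientation of `G` such that each arc `(u,v)` (with `u ~ v` in `G`) lies
in exactly one of the cycles. -/
def IsOCDC {V : Type*} (G : SimpleGraph V) (C : Finset (List V)) : Prop :=
  (∀ l ∈ C, IsDirCycle G l) ∧
    ∀ u v : V, G.Adj u v → ∃! l : List V, l ∈ C ∧ (u, v) ∈ cycleArcs l

/-- `G` (a graph with vertex set of size `n`) has a small oriented cycle double cover:
an OCDC with at most `n - 1` directed cycles. -/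
def HasSOCDC {V : Type*} (G : SimpleGraph V) : Prop :=
  ∃ C : Finset (List V), IsOCDC G C ∧ C.card ≤ Nat.card V - 1

/-- `l` represents a directed path of the symmetric orientation of `G`. -/
def IsDirPath {V : Type*} (G : SimpleGraph V) (l : List V) : Prop :=
  l ≠ [] ∧ l.Nodup ∧ l.Chain' G.Adj

/-- An oriented perfect path double cover of `G`: a collection of directed paths of the
symmetric orientation of `G` such that each arc lies in exactly one path, and every
vertex occurs exactly once as the start and exactly once as the end of a path. -/
def IsOPPDC {V : Type*} (G : SimpleGraph V) (P : Finset (List V)) : Prop :=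
  (∀ l ∈ P, IsDirPath G l) ∧
    (∀ u v : V, G.Adj u v → ∃! l : List V, l ∈ P ∧ (u, v) ∈ l.zip l.tail) ∧
    (∀ v : V, ∃! l : List V, l ∈ P ∧ l.head? = some v) ∧
    (∀ v : V, ∃! l : List V, l ∈ P ∧ l.getLast? = some v)

namespace Subdiv

variable {V W : Type*}

lemma length_cycleArcs (l : List V) : (cycleArcs l).length = l.length := by
  simp [cycleArcs]

lemma mem_cycleArcs_iff {l : List V} {p : V × V} :
    p ∈ cycleArcs l ↔ ∃ i, ∃ h : i < l.length, l[i] = p.1 ∧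
      l[(i + 1) % l.length]'(Nat.mod_lt _ (Nat.lt_of_le_of_lt (Nat.zero_le i) h)) = p.2 := by
  unfold cycleArcs
  rw [List.mem_iff_getElem]
  constructor
  · rintro ⟨i, h, hp⟩
    have hi : i < l.length := by simpa [cycleArcs] using h
    refine ⟨i, hi, ?_, ?_⟩
    · rw [← hp]; simp [List.getElem_zip]
    · rw [← hp]; simp [List.getElem_zip, List.getElem_rotate]
  · rintro ⟨i, hi, h1, h2⟩
    refine ⟨i, by simpa using hi, ?_⟩
    have : (l.zip (l.rotate 1))[i]'(by simpa using hi) = (l[i], (l.rotate 1)[i]'(by simpa using hi)) :=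
      List.getElem_zip
    rw [this, List.getElem_rotate]
    exact Prod.ext h1 h2

lemma zip_rotate : ∀ (k : ℕ) (l : List V) (m : List W), l.length = m.length →
    (l.rotate k).zip (m.rotate k) = (l.zip m).rotate k
  | 0, l, m, _ => by simp
  | (k+1), l, m, h => by
    match l, m, h with
    | [], [], _ => simp
    | a :: l, b :: m, h =>
      have h' : l.length = m.length := by simpa using h
      have h'' : (l ++ [a]).length = (m ++ [b]).length := by simp [h']
      rw [List.rotate_cons_succ, List.rotate_cons_succ, zip_rotate k _ _ h'',
        List.zip_append h']
      show _ = ((a, b) :: l.zip m).rotate (k + 1)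
      rw [List.rotate_cons_succ]
      rfl

lemma cycleArcs_rotate (l : List V) (k : ℕ) :
    cycleArcs (l.rotate k) = (cycleArcs l).rotate k := by
  unfold cycleArcs
  rw [List.rotate_rotate, Nat.add_comm, ← List.rotate_rotate,
    zip_rotate k l (l.rotate 1) (by simp)]

lemma mem_cycleArcs_rotate {l : List V} {k : ℕ} {p : V × V} :
    p ∈ cycleArcs (l.rotate k) ↔ p ∈ cycleArcs l := by
  rw [cycleArcs_rotate]; exact List.mem_rotate

lemma cycleArcs_map (g : V → W) (l : List V) :
    cycleArcs (l.map g) = (cycleArcs l).map (Prod.map g g) := by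
  unfold cycleArcs
  rw [← List.map_rotate, List.zip_map]

lemma cycleArcs_cons_cons (a b : V) (t : List V) :
    cycleArcs (a :: b :: t) = (a, b) :: (b :: t).zip (t ++ [a]) := by
  show List.zip _ (List.rotate _ (0+1)) = _
  rw [List.rotate_cons_succ, List.rotate_zero]
  rfl


lemma rotate_indexOf_eq_cons [DecidableEq V] {l : List V} (hn : l.Nodup) (h3 : 3 ≤ l.length)
    {a b : V} (hab : (a, b) ∈ cycleArcs l) :
    ∃ t, l.rotate (l.idxOf a) = a :: b :: t := by
  have ha : a ∈ l := (List.of_mem_zip hab).1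
  have hk : l.idxOf a < l.length := List.idxOf_lt_length_iff.2 ha
  have hlen : (l.rotate (l.idxOf a)).length = l.length := by simp
  have hpos : 0 < (l.rotate (l.idxOf a)).length := by omega
  have hr0 : (l.rotate (l.idxOf a))[0]'hpos = a := by
    rw [List.getElem_rotate]
    simp only [Nat.zero_add, Nat.mod_eq_of_lt hk]
    exact List.getElem_idxOf hk
  have hnr : (l.rotate (l.idxOf a)).Nodup := List.nodup_rotate.2 hn
  have harc : (a, b) ∈ cycleArcs (l.rotate (l.idxOf a)) := mem_cycleArcs_rotate.2 hab
  rw [mem_cycleArcs_iff] at harc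
  obtain ⟨i, hi, h1, h2⟩ := harc
  have hi0 : i = 0 := by
    have := hnr.getElem_inj_iff (hi := hi) (hj := hpos)
    rw [h1, hr0] at this
    simpa using this.1 rfl
  subst hi0
  have h1r : 1 < (l.rotate (l.idxOf a)).length := by omega
  have hr1 : (l.rotate (l.idxOf a))[1]'h1r = b := by
    have hm : (0 + 1) % (l.rotate (l.idxOf a)).length = 1 := Nat.mod_eq_of_lt (by omega)
    simp only [hm] at h2
    exact h2
  have hq0 : (l.rotate (l.idxOf a))[0]? = some a := by
    rw [List.getElem?_eq_getElem hpos, hr0]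
  have hq1 : (l.rotate (l.idxOf a))[1]? = some b := by
    rw [List.getElem?_eq_getElem h1r, hr1]
  rcases hr : l.rotate (l.idxOf a) with _ | ⟨x, _ | ⟨y, t⟩⟩
  · rw [hr] at hpos; simp at hpos
  · rw [hr] at h1r; simp at h1r
  · rw [hr] at hq0 hq1
    simp only [List.getElem?_cons_zero, List.getElem?_cons_succ, Option.some_inj] at hq0 hq1
    exact ⟨t, by rw [hq0, hq1]⟩

lemma not_rev_mem_cycleArcs {l : List V} (hn : l.Nodup) (h3 : 3 ≤ l.length) {a b : V}
    (hab : (a, b) ∈ cycleArcs l) : (b, a) ∉ cycleArcs l := by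
  classical
  intro hba
  obtain ⟨t, hrot⟩ := rotate_indexOf_eq_cons hn h3 hab
  have hnr : (a :: b :: t).Nodup := by rw [← hrot]; exact List.nodup_rotate.2 hn
  have hlen : (a :: b :: t).length = l.length := by rw [← hrot]; simp
  have hanotin : a ∉ b :: t := (List.nodup_cons.1 hnr).1
  have hnbt : (b :: t).Nodup := (List.nodup_cons.1 hnr).2
  have hba' : (b, a) ∈ cycleArcs (a :: b :: t) := by
    rw [← hrot]; exact mem_cycleArcs_rotate.2 hba
  rw [cycleArcs_cons_cons] at hba'
  rcases List.mem_cons.1 hba' with heq | hmem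
  · rw [Prod.mk.injEq] at heq
    exact hanotin (heq.2 ▸ List.mem_cons_self)
  · rw [List.mem_iff_getElem] at hmem
    obtain ⟨i, hi, hgi⟩ := hmem
    rw [List.getElem_zip, Prod.mk.injEq] at hgi
    have hi1 : i < (b :: t).length := by simp only [List.length_zip] at hi; omega
    have hi0 : i = 0 := by
      have h0 : (b :: t)[0]'(by simp) = b := rfl
      have := hnbt.getElem_inj_iff (hi := hi1) (hj := (by simp : 0 < (b :: t).length))
      rw [h0] at this
      exact this.1 hgi.1
    subst hi0
    have htne : t ≠ [] := by
      intro h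
      subst h
      simp at hlen
      omega
    obtain ⟨c, t', rfl⟩ := List.exists_cons_of_ne_nil htne
    have hc : c = a := by simpa using hgi.2
    exact hanotin (by simp [hc])


lemma cycleArcs_subdivList_eq (a b : V) (t : List V) :
    cycleArcs ((Sum.inl a : V ⊕ Unit) :: Sum.inr () :: (b :: t).map Sum.inl) =
      (Sum.inl a, Sum.inr ()) :: ((Sum.inr (), Sum.inl b) ::
        ((b :: t).zip (t ++ [a])).map (Prod.map Sum.inl Sum.inl)) := by
  rw [List.map_cons, cycleArcs_cons_cons, List.cons_append, List.zip_cons_cons]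
  congr 2
  have h1 : (Sum.inl b : V ⊕ Unit) :: t.map Sum.inl = (b :: t).map Sum.inl := rfl
  have h2 : (t.map Sum.inl ++ [(Sum.inl a : V ⊕ Unit)]) = (t ++ [a]).map Sum.inl := by
    simp
  rw [h1, h2, List.zip_map]

lemma mem_cycleArcs_subdivList [DecidableEq V] {l : List V} (hn : l.Nodup) (h3 : 3 ≤ l.length)
    {a b : V} (hab : (a, b) ∈ cycleArcs l) (p : (V ⊕ Unit) × (V ⊕ Unit)) :
    p ∈ cycleArcs ((Sum.inl a : V ⊕ Unit) :: Sum.inr () ::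
        (l.rotate (l.idxOf a)).tail.map Sum.inl) ↔
      p = (Sum.inl a, Sum.inr ()) ∨ p = (Sum.inr (), Sum.inl b) ∨
        ∃ c d : V, p = (Sum.inl c, Sum.inl d) ∧ (c, d) ∈ cycleArcs l ∧ (c, d) ≠ (a, b) := by
  obtain ⟨t, hrot⟩ := rotate_indexOf_eq_cons hn h3 hab
  have hnr : (a :: b :: t).Nodup := by rw [← hrot]; exact List.nodup_rotate.2 hn
  have hanotin : a ∉ b :: t := (List.nodup_cons.1 hnr).1
  have hmemiff : ∀ q : V × V, q ∈ cycleArcs (a :: b :: t) ↔ q ∈ cycleArcs l := by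
    intro q
    rw [← hrot]
    exact mem_cycleArcs_rotate
  rw [hrot]
  show p ∈ cycleArcs ((Sum.inl a : V ⊕ Unit) :: Sum.inr () :: (b :: t).map Sum.inl) ↔ _
  rw [cycleArcs_subdivList_eq, List.mem_cons, List.mem_cons, List.mem_map]
  constructor
  · rintro (h1 | h2 | ⟨⟨c, d⟩, hq, rfl⟩)
    · exact Or.inl h1
    · exact Or.inr (Or.inl h2)
    · refine Or.inr (Or.inr ⟨c, d, rfl, ?_, ?_⟩)
      · rw [← hmemiff, cycleArcs_cons_cons]
        exact List.mem_cons_of_mem _ hq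
      · intro hcd
        rw [Prod.mk.injEq] at hcd
        exact hanotin (hcd.1 ▸ (List.of_mem_zip hq).1)
  · rintro (h1 | h2 | ⟨c, d, rfl, hcd, hne⟩)
    · exact Or.inl h1
    · exact Or.inr (Or.inl h2)
    · refine Or.inr (Or.inr ⟨(c, d), ?_, rfl⟩)
      have := (hmemiff (c, d)).2 hcd
      rw [cycleArcs_cons_cons, List.mem_cons] at this
      exact this.resolve_left hne

lemma nodup_length_subdivList [DecidableEq V] {l : List V} (hn : l.Nodup) (h3 : 3 ≤ l.length)
    {a b : V} (hab : (a, b) ∈ cycleArcs l) :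
    ((Sum.inl a : V ⊕ Unit) :: Sum.inr () ::
        (l.rotate (l.idxOf a)).tail.map Sum.inl).Nodup ∧
    ((Sum.inl a : V ⊕ Unit) :: Sum.inr () ::
        (l.rotate (l.idxOf a)).tail.map Sum.inl).length = l.length + 1 := by
  obtain ⟨t, hrot⟩ := rotate_indexOf_eq_cons hn h3 hab
  have hnr : (a :: b :: t).Nodup := by rw [← hrot]; exact List.nodup_rotate.2 hn
  have hlen : (a :: b :: t).length = l.length := by rw [← hrot]; simp
  rw [hrot]
  constructor
  · show ((Sum.inl a : V ⊕ Unit) :: Sum.inr () :: (b :: t).map Sum.inl).Nodup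
    have h1 : a ∉ b :: t := (List.nodup_cons.1 hnr).1
    have h2 : (b :: t).Nodup := (List.nodup_cons.1 hnr).2
    simp only [List.nodup_cons, List.mem_cons, List.mem_map]
    refine ⟨?_, ?_, h2.map Sum.inl_injective⟩
    · rintro (h | ⟨x, hx, hxe⟩)
      · exact absurd h (by simp)
      · exact h1 (List.mem_cons.2 (Sum.inl_injective hxe ▸ hx))
    · rintro ⟨x, _, hxe⟩
      exact absurd hxe (by simp)
  · show ((Sum.inl a : V ⊕ Unit) :: Sum.inr () :: (b :: t).map Sum.inl).length = l.length + 1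
    simp only [List.length_cons, List.length_map] at *
    omega

end Subdiv

/-- If `G` has an SOCDC and `G'` is obtained from `G` by subdividing the edge `uv`
(replacing it by a new vertex `w` joined to `u` and `v`), then `G'` has an SOCDC. -/
theorem hasSOCDC_of_subdivision {V : Type} [Finite V] (G : SimpleGraph V) (u v : V)
    (huv : G.Adj u v) (hG : HasSOCDC G)
    (G' : SimpleGraph (V ⊕ Unit))
    (hadj : ∀ x y : V ⊕ Unit, G'.Adj x y ↔
      ((∃ a b : V, x = Sum.inl a ∧ y = Sum.inl b ∧ G.Adj a b ∧
          ¬(a = u ∧ b = v) ∧ ¬(a = v ∧ b = u)) ∨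
        (∃ a : V, (x = Sum.inl a ∧ y = Sum.inr () ∨ x = Sum.inr () ∧ y = Sum.inl a) ∧
          (a = u ∨ a = v)))) :
    HasSOCDC G' := by
  classical
  open Subdiv in
  obtain ⟨C, ⟨hcyc, huniq⟩, hcard⟩ := hG
  have hne : u ≠ v := huv.ne
  set f : List V → List (V ⊕ Unit) := fun l =>
    if (u, v) ∈ cycleArcs l then
      Sum.inl u :: Sum.inr () :: (l.rotate (l.idxOf u)).tail.map Sum.inl
    else if (v, u) ∈ cycleArcs l then
      Sum.inl v :: Sum.inr () :: (l.rotate (l.idxOf v)).tail.map Sum.inl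
    else l.map Sum.inl with hfdef
  have hfA : ∀ l : List V, (u, v) ∈ cycleArcs l →
      f l = Sum.inl u :: Sum.inr () :: (l.rotate (l.idxOf u)).tail.map Sum.inl := by
    intro l h; simp only [hfdef, if_pos h]
  have hfB : ∀ l : List V, (u, v) ∉ cycleArcs l → (v, u) ∈ cycleArcs l →
      f l = Sum.inl v :: Sum.inr () :: (l.rotate (l.idxOf v)).tail.map Sum.inl := by
    intro l h h'; simp only [hfdef, if_neg h, if_pos h']
  have hfC : ∀ l : List V, (u, v) ∉ cycleArcs l → (v, u) ∉ cycleArcs l →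
      f l = l.map Sum.inl := by
    intro l h h'; simp only [hfdef, if_neg h, if_neg h']
  -- the master description of the arcs of `f l`
  have key : ∀ l ∈ C, ∀ p : (V ⊕ Unit) × (V ⊕ Unit), p ∈ cycleArcs (f l) ↔
      ((u, v) ∈ cycleArcs l ∧ (p = (Sum.inl u, Sum.inr ()) ∨ p = (Sum.inr (), Sum.inl v))) ∨
      ((v, u) ∈ cycleArcs l ∧ (p = (Sum.inl v, Sum.inr ()) ∨ p = (Sum.inr (), Sum.inl u))) ∨
      (∃ c d : V, p = (Sum.inl c, Sum.inl d) ∧ (c, d) ∈ cycleArcs l ∧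
        (c, d) ≠ (u, v) ∧ (c, d) ≠ (v, u)) := by
    intro l hl p
    obtain ⟨h3, hn, _⟩ := hcyc l hl
    by_cases hA : (u, v) ∈ cycleArcs l
    · have hBn : (v, u) ∉ cycleArcs l := not_rev_mem_cycleArcs hn h3 hA
      rw [hfA l hA, mem_cycleArcs_subdivList hn h3 hA p]
      constructor
      · rintro (h | h | ⟨c, d, rfl, hcd, hne'⟩)
        · exact Or.inl ⟨hA, Or.inl h⟩
        · exact Or.inl ⟨hA, Or.inr h⟩
        · exact Or.inr (Or.inr ⟨c, d, rfl, hcd, hne', fun hh => hBn (hh ▸ hcd)⟩)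
      · rintro (⟨_, h | h⟩ | ⟨hB, _⟩ | ⟨c, d, rfl, hcd, hne', _⟩)
        · exact Or.inl h
        · exact Or.inr (Or.inl h)
        · exact absurd hB hBn
        · exact Or.inr (Or.inr ⟨c, d, rfl, hcd, hne'⟩)
    · by_cases hB : (v, u) ∈ cycleArcs l
      · rw [hfB l hA hB, mem_cycleArcs_subdivList hn h3 hB p]
        constructor
        · rintro (h | h | ⟨c, d, rfl, hcd, hne'⟩)
          · exact Or.inr (Or.inl ⟨hB, Or.inl h⟩)
          · exact Or.inr (Or.inl ⟨hB, Or.inr h⟩)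
          · exact Or.inr (Or.inr ⟨c, d, rfl, hcd, fun hh => hA (hh ▸ hcd), hne'⟩)
        · rintro (⟨hA', _⟩ | ⟨_, h | h⟩ | ⟨c, d, rfl, hcd, _, hne'⟩)
          · exact absurd hA' hA
          · exact Or.inl h
          · exact Or.inr (Or.inl h)
          · exact Or.inr (Or.inr ⟨c, d, rfl, hcd, hne'⟩)
      · rw [hfC l hA hB, cycleArcs_map, List.mem_map]
        constructor
        · rintro ⟨⟨c, d⟩, hcd, rfl⟩
          exact Or.inr (Or.inr ⟨c, d, rfl, hcd, fun hh => hA (hh ▸ hcd),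
            fun hh => hB (hh ▸ hcd)⟩)
        · rintro (⟨hA', _⟩ | ⟨hB', _⟩ | ⟨c, d, rfl, hcd, _, _⟩)
          · exact absurd hA' hA
          · exact absurd hB' hB
          · exact ⟨(c, d), hcd, rfl⟩
  -- each `f l` is a directed cycle of `G'`
  have hdc : ∀ l ∈ C, IsDirCycle G' (f l) := by
    intro l hl
    obtain ⟨h3, hn, hadjl⟩ := hcyc l hl
    refine ⟨?_, ?_, ?_⟩
    · by_cases hA : (u, v) ∈ cycleArcs l
      · rw [hfA l hA, (nodup_length_subdivList hn h3 hA).2]; omega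
      · by_cases hB : (v, u) ∈ cycleArcs l
        · rw [hfB l hA hB, (nodup_length_subdivList hn h3 hB).2]; omega
        · rw [hfC l hA hB]; simpa using h3
    · by_cases hA : (u, v) ∈ cycleArcs l
      · rw [hfA l hA]; exact (nodup_length_subdivList hn h3 hA).1
      · by_cases hB : (v, u) ∈ cycleArcs l
        · rw [hfB l hA hB]; exact (nodup_length_subdivList hn h3 hB).1
        · rw [hfC l hA hB]; exact hn.map Sum.inl_injective
    · intro p hp
      rw [key l hl p] at hp
      rcases hp with ⟨_, rfl | rfl⟩ | ⟨_, rfl | rfl⟩ | ⟨c, d, rfl, hcd, hne1, hne2⟩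
      · exact (hadj _ _).2 (Or.inr ⟨u, Or.inl ⟨rfl, rfl⟩, Or.inl rfl⟩)
      · exact (hadj _ _).2 (Or.inr ⟨v, Or.inr ⟨rfl, rfl⟩, Or.inr rfl⟩)
      · exact (hadj _ _).2 (Or.inr ⟨v, Or.inl ⟨rfl, rfl⟩, Or.inr rfl⟩)
      · exact (hadj _ _).2 (Or.inr ⟨u, Or.inr ⟨rfl, rfl⟩, Or.inl rfl⟩)
      · refine (hadj _ _).2 (Or.inl ⟨c, d, rfl, rfl, hadjl (c, d) hcd, ?_, ?_⟩)
        · rintro ⟨rfl, rfl⟩; exact hne1 rfl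
        · rintro ⟨rfl, rfl⟩; exact hne2 rfl
  refine ⟨C.image f, ⟨?_, ?_⟩, ?_⟩
  · rintro m hm
    obtain ⟨l, hl, rfl⟩ := Finset.mem_image.1 hm
    exact hdc l hl
  · intro x y hxy
    rw [hadj] at hxy
    rcases hxy with ⟨a, b, rfl, rfl, hGab, hnuv, hnvu⟩ | ⟨a, ⟨rfl, rfl⟩ | ⟨rfl, rfl⟩, hor⟩
    · -- arc between two original vertices
      have hne1 : (a, b) ≠ (u, v) := by
        rintro h; rw [Prod.mk.injEq] at h; exact hnuv ⟨h.1, h.2⟩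
      have hne2 : (a, b) ≠ (v, u) := by
        rintro h; rw [Prod.mk.injEq] at h; exact hnvu ⟨h.1, h.2⟩
      obtain ⟨l0, ⟨hl0, hab0⟩, huq⟩ := huniq a b hGab
      refine ⟨f l0, ⟨Finset.mem_image_of_mem f hl0, ?_⟩, ?_⟩
      · rw [key l0 hl0]
        exact Or.inr (Or.inr ⟨a, b, rfl, hab0, hne1, hne2⟩)
      · rintro m ⟨hm, hpm⟩
        obtain ⟨l', hl', rfl⟩ := Finset.mem_image.1 hm
        rw [key l' hl'] at hpm
        rcases hpm with ⟨_, h | h⟩ | ⟨_, h | h⟩ | ⟨c, d, h, hcd, _, _⟩ <;>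
          rw [Prod.mk.injEq] at h
        · exact absurd h.2 (by simp)
        · exact absurd h.1 (by simp)
        · exact absurd h.2 (by simp)
        · exact absurd h.1 (by simp)
        · obtain ⟨rfl, rfl⟩ : a = c ∧ b = d :=
            ⟨Sum.inl_injective h.1, Sum.inl_injective h.2⟩
          exact congrArg f (huq l' ⟨hl', hcd⟩)
    · -- arc (inl a, w) with a = u or a = v
      rcases hor with h | h <;> obtain rfl := h.symm
      · obtain ⟨l0, ⟨hl0, harc⟩, huq⟩ := huniq u v huv
        refine ⟨f l0, ⟨Finset.mem_image_of_mem f hl0, ?_⟩, ?_⟩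
        · rw [key l0 hl0]; exact Or.inl ⟨harc, Or.inl rfl⟩
        · rintro m ⟨hm, hpm⟩
          obtain ⟨l', hl', rfl⟩ := Finset.mem_image.1 hm
          rw [key l' hl'] at hpm
          rcases hpm with ⟨hA', h | h⟩ | ⟨_, h | h⟩ | ⟨c, d, h, _, _, _⟩ <;>
            rw [Prod.mk.injEq] at h
          · exact congrArg f (huq l' ⟨hl', hA'⟩)
          · exact absurd h.1 (by simp)
          · exact absurd h.1 (by simpa using hne)
          · exact absurd h.1 (by simp)
          · exact absurd h.2 (by simp)
      · obtain ⟨l1, ⟨hl1, harc⟩, huq⟩ := huniq v u huv.symm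
        refine ⟨f l1, ⟨Finset.mem_image_of_mem f hl1, ?_⟩, ?_⟩
        · rw [key l1 hl1]; exact Or.inr (Or.inl ⟨harc, Or.inl rfl⟩)
        · rintro m ⟨hm, hpm⟩
          obtain ⟨l', hl', rfl⟩ := Finset.mem_image.1 hm
          rw [key l' hl'] at hpm
          rcases hpm with ⟨_, h | h⟩ | ⟨hB', h | h⟩ | ⟨c, d, h, _, _, _⟩ <;>
            rw [Prod.mk.injEq] at h
          · exact absurd h.1 (by simpa using hne.symm)
          · exact absurd h.1 (by simp)
          · exact congrArg f (huq l' ⟨hl', hB'⟩)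
          · exact absurd h.1 (by simp)
          · exact absurd h.2 (by simp)
    · -- arc (w, inl a) with a = u or a = v
      rcases hor with h | h <;> obtain rfl := h.symm
      · obtain ⟨l1, ⟨hl1, harc⟩, huq⟩ := huniq v u huv.symm
        refine ⟨f l1, ⟨Finset.mem_image_of_mem f hl1, ?_⟩, ?_⟩
        · rw [key l1 hl1]; exact Or.inr (Or.inl ⟨harc, Or.inr rfl⟩)
        · rintro m ⟨hm, hpm⟩
          obtain ⟨l', hl', rfl⟩ := Finset.mem_image.1 hm
          rw [key l' hl'] at hpm
          rcases hpm with ⟨_, h | h⟩ | ⟨hB', h | h⟩ | ⟨c, d, h, _, _, _⟩ <;>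
            rw [Prod.mk.injEq] at h
          · exact absurd h.1 (by simp)
          · exact absurd h.2 (by simpa using hne)
          · exact absurd h.1 (by simp)
          · exact congrArg f (huq l' ⟨hl', hB'⟩)
          · exact absurd h.1 (by simp)
      · obtain ⟨l0, ⟨hl0, harc⟩, huq⟩ := huniq u v huv
        refine ⟨f l0, ⟨Finset.mem_image_of_mem f hl0, ?_⟩, ?_⟩
        · rw [key l0 hl0]; exact Or.inl ⟨harc, Or.inr rfl⟩
        · rintro m ⟨hm, hpm⟩
          obtain ⟨l', hl', rfl⟩ := Finset.mem_image.1 hm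
          rw [key l' hl'] at hpm
          rcases hpm with ⟨hA', h | h⟩ | ⟨_, h | h⟩ | ⟨c, d, h, _, _, _⟩ <;>
            rw [Prod.mk.injEq] at h
          · exact absurd h.1 (by simp)
          · exact congrArg f (huq l' ⟨hl', hA'⟩)
          · exact absurd h.1 (by simp)
          · exact absurd h.2 (by simpa using hne.symm)
          · exact absurd h.1 (by simp)
  · have hc : Nat.card (V ⊕ Unit) = Nat.card V + 1 := by
      rw [Nat.card_sum]; simp
    have := Finset.card_image_le (s := C) (f := f)
    omega
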